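/- Let F = ℤ/2ℤ and let X be a finite set. Let R_X = F[X]/({x² : x ∈ X}) and let F_X = R_X ⊗_F Ξ_X, where Ξ_X = ⊗_{x∈X} F[ξ_x,ξ_x⁻¹]/ξ_xF[ξ_x], with differential ∂(r⊗ξ) = Σ_{x∈X} (xr)⊗(ξ_x ξ). Then F_X is a chain complex of free R_X-modules whose homology is F concentrated in homological degree 0, i.e. F_X is a free R_X-resolution of the R_X-module F = R_X/({x : x ∈ X}). -/

import Mathlib

/-!
STATEMENT 2: Let F = ℤ/2ℤ and X a finite set, R_X = F[X]/({x²}), Ξ_X the span of the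
monomials ∏ ξ_x^{-n_x}, and F_X = R_X ⊗_F Ξ_X with differential ∂(r⊗ξ) = Σ_x (xr)⊗(ξ_x ξ).
Then F_X is a chain complex (∂² = 0) of free R_X-modules, R_X-linearly, whose homology is
F concentrated in degree 0: i.e. F_X is a free R_X-resolution of F = R_X/({x}), via the
augmentation q(r ⊗ 1) = ε(r), q(r ⊗ ξ) = 0 for monomials ξ ≠ 1.
-/

set_option synthInstance.maxHeartbeats 1000000
set_option maxHeartbeats 1000000

noncomputable section
open scoped TensorProduct

abbrev F2 := ZMod 2

abbrev Rgen (X : Type) : Type :=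
  MvPolynomial X F2 ⧸
    Ideal.span (Set.range fun x : X => (MvPolynomial.X x : MvPolynomial X F2) ^ 2)

def rgen {X : Type} (x : X) : Rgen X := Ideal.Quotient.mk _ (MvPolynomial.X x)

abbrev XiX (X : Type) : Type := (X →₀ ℕ) →₀ F2

def ximon {X : Type} (n : X →₀ ℕ) : XiX X := Finsupp.single n 1

def xiMul {X : Type} [DecidableEq X] (x : X) : XiX X →ₗ[F2] XiX X :=
  Finsupp.lsum F2 fun n =>
    if n x = 0 then (0 : F2 →ₗ[F2] XiX X)
    else Finsupp.lsingle (n - Finsupp.single x 1)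

/-- `F_X = R_X ⊗_F Ξ_X`. -/
abbrev FX (X : Type) : Type := Rgen X ⊗[F2] XiX X

/-- The differential `∂(r ⊗ ξ) = Σ_x (x·r) ⊗ (ξ_x·ξ)` on `F_X`. -/
def dFX (X : Type) [Fintype X] [DecidableEq X] : FX X →ₗ[F2] FX X :=
  ∑ x : X, TensorProduct.map (LinearMap.mulLeft F2 (rgen x)) (xiMul x)

noncomputable instance instZeroFX (X : Type) : Zero (FX X) :=
  (inferInstance : AddCommMonoid (FX X)).toZero

-- basics
lemma add_self_F2 {M : Type*} [AddCommMonoid M] [Module F2 M] (a : M) : a + a = 0 := by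
  have : a + a = ((1 : F2) + 1) • a := by rw [add_smul, one_smul]
  rw [this]
  have h2 : (1 : F2) + 1 = 0 := by decide
  rw [h2, zero_smul]

lemma xiMul_ximon {X : Type} [DecidableEq X] (x : X) (n : X →₀ ℕ) :
    xiMul x (ximon n) =
      if n x = 0 then 0 else ximon (n - Finsupp.single x 1) := by
  rw [ximon, xiMul, Finsupp.lsum_single]
  split <;> simp [ximon]

open MvPolynomial

variable {X : Type} [DecidableEq X]

abbrev Ispan (X : Type) : Ideal (MvPolynomial X F2) :=
  Ideal.span (Set.range fun x : X => (MvPolynomial.X x : MvPolynomial X F2) ^ 2)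

def sqf (S : Finset X) : X →₀ ℕ := ∑ x ∈ S, Finsupp.single x 1

lemma sqf_apply (S : Finset X) (y : X) : sqf S y = if y ∈ S then 1 else 0 := by
  classical
  rw [sqf, Finset.sum_apply']
  simp [Finsupp.single_apply, Finset.sum_ite_eq' S y]

lemma sqf_empty : sqf (∅ : Finset X) = 0 := by simp [sqf]

lemma sqf_insert {x : X} {S : Finset X} (h : x ∉ S) :
    sqf (insert x S) = Finsupp.single x 1 + sqf S := by
  rw [sqf, Finset.sum_insert h]; rfl

lemma sqf_le_one (S : Finset X) (y : X) : sqf S y ≤ 1 := by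
  rw [sqf_apply]; split <;> omega

set_option linter.unusedSectionVars false

lemma sqf_support (S : Finset X) : (sqf S).support = S := by
  ext y; simp [Finsupp.mem_support_iff, sqf_apply]

lemma sqf_of_squarefree {d : X →₀ ℕ} (h : ∀ x, d x ≤ 1) : sqf d.support = d := by
  ext y
  rw [sqf_apply]
  by_cases hy : y ∈ d.support
  · simp only [hy, if_true]
    have := Finsupp.mem_support_iff.mp hy
    have := h y; omega
  · simp only [hy, if_false]
    exact (Finsupp.notMem_support_iff.mp hy).symm

def piProj (X : Type) [DecidableEq X] : MvPolynomial X F2 →ₗ[F2] (Finset X →₀ F2) :=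
  (MvPolynomial.basisMonomials X F2).constr F2 fun d =>
    if ∀ x ∈ d.support, d x ≤ 1 then Finsupp.single d.support 1 else 0

lemma piProj_monomial (d : X →₀ ℕ) (c : F2) :
    piProj X (monomial d c) =
      if ∀ x ∈ d.support, d x ≤ 1 then Finsupp.single d.support c else 0 := by
  have h1 : monomial d c = c • monomial d (1 : F2) := by
    rw [smul_monomial, smul_eq_mul, mul_one]
  have h2 : (monomial d (1 : F2)) = (MvPolynomial.basisMonomials X F2) d := by
    rw [coe_basisMonomials]
  rw [h1, map_smul, h2, piProj, Module.Basis.constr_basis]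
  split
  · rw [Finsupp.smul_single, smul_eq_mul, mul_one]
  · rw [smul_zero]

lemma sqfree_iff (d : X →₀ ℕ) : (∀ x ∈ d.support, d x ≤ 1) ↔ (∀ x, d x ≤ 1) := by
  constructor
  · intro h x
    by_cases hx : x ∈ d.support
    · exact h x hx
    · rw [Finsupp.notMem_support_iff.mp hx]; omega
  · intro h x _; exact h x

lemma piProj_mul_gen (q : MvPolynomial X F2) (x : X) :
    piProj X (q * MvPolynomial.X x ^ 2) = 0 := by
  induction q using MvPolynomial.induction_on' with
  | monomial d c =>
    rw [X_pow_eq_monomial, monomial_mul, mul_one, piProj_monomial, if_neg]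
    rw [sqfree_iff]
    intro h
    have := h x
    simp [Finsupp.single_apply] at this
  | add p q hp hq => rw [add_mul, map_add, hp, hq, add_zero]

lemma piProj_ideal {a : MvPolynomial X F2} (ha : a ∈ Ispan X) : piProj X a = 0 := by
  have key : ∀ a ∈ Ispan X, ∀ q : MvPolynomial X F2, piProj X (q * a) = 0 := by
    intro a ha
    refine Submodule.span_induction ?_ ?_ ?_ ?_ ha
    · rintro _ ⟨x, rfl⟩ q; exact piProj_mul_gen q x
    · intro q; rw [mul_zero, map_zero]
    · intro y z _ _ hy hz q; rw [mul_add, map_add, hy, hz, add_zero]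
    · intro r y _ hy q; rw [smul_eq_mul, ← mul_assoc, hy]
  simpa using key a ha 1

abbrev mkQ (X : Type) : MvPolynomial X F2 →ₐ[F2] Rgen X := Ideal.Quotient.mkₐ F2 (Ispan X)

lemma mk_monomial_of_two {d : X →₀ ℕ} {x : X} (h : 2 ≤ d x) (c : F2) :
    mkQ X (monomial d c) = 0 := by
  have hle : Finsupp.single x 2 ≤ d := Finsupp.single_le_iff.mpr h
  have : monomial d c = monomial (d - Finsupp.single x 2) c * (MvPolynomial.X x ^ 2) := by
    rw [X_pow_eq_monomial, monomial_mul, mul_one, tsub_add_cancel_of_le hle]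
  rw [this]
  rw [Ideal.Quotient.mkₐ_eq_mk, Ideal.Quotient.eq_zero_iff_mem]
  exact Ideal.mul_mem_left _ _ (Ideal.subset_span ⟨x, rfl⟩)

def bRfun (S : Finset X) : Rgen X := mkQ X (monomial (sqf S) 1)

variable [Fintype X]

lemma bR_li : LinearIndependent F2 (bRfun (X := X)) := by
  rw [Fintype.linearIndependent_iff]
  intro g hg S₀
  have h0 : (mkQ X).toLinearMap (∑ S : Finset X, g S • monomial (sqf S) 1) = 0 := by
    rw [map_sum]
    simpa [bRfun] using hg
  have hmem : (∑ S : Finset X, g S • monomial (sqf S) (1 : F2)) ∈ Ispan X := by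
    rwa [AlgHom.toLinearMap_apply, Ideal.Quotient.mkₐ_eq_mk,
      Ideal.Quotient.eq_zero_iff_mem] at h0
  have h2 := piProj_ideal hmem
  rw [map_sum] at h2
  have h3 : ∀ S : Finset X, piProj X (g S • monomial (sqf S) (1 : F2)) =
      Finsupp.single S (g S) := by
    intro S
    rw [map_smul, piProj_monomial, if_pos, sqf_support, Finsupp.smul_single, smul_eq_mul,
      mul_one]
    intro x _; exact sqf_le_one S x
  rw [Finset.sum_congr rfl fun S _ => h3 S] at h2
  have := congrArg (fun f => f S₀) h2
  simpa [Finsupp.finset_sum_apply, Finsupp.single_apply] using this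

lemma bR_span : ⊤ ≤ Submodule.span F2 (Set.range (bRfun (X := X))) := by
  have key : ∀ p : MvPolynomial X F2,
      mkQ X p ∈ Submodule.span F2 (Set.range (bRfun (X := X))) := by
    intro p
    induction p using MvPolynomial.induction_on' with
    | monomial d c =>
      by_cases h : ∀ x, d x ≤ 1
      · have hd : monomial d c = c • monomial (sqf d.support) (1 : F2) := by
          rw [sqf_of_squarefree h, smul_monomial, smul_eq_mul, mul_one]
        rw [hd, map_smul]
        exact Submodule.smul_mem _ _ (Submodule.subset_span ⟨d.support, rfl⟩)
      · push_neg at h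
        obtain ⟨x, hx⟩ := h
        rw [mk_monomial_of_two (x := x) (by omega) c]
        exact Submodule.zero_mem _
    | add p q hp hq =>
      rw [map_add]
      exact Submodule.add_mem _ hp hq
  intro z _
  obtain ⟨p, rfl⟩ := Ideal.Quotient.mk_surjective z
  exact key p

def bR (X : Type) [Fintype X] [DecidableEq X] : Module.Basis (Finset X) F2 (Rgen X) := Module.Basis.mk bR_li bR_span

lemma bR_apply (S : Finset X) : bR X S = mkQ X (monomial (sqf S) 1) := by
  rw [bR, Module.Basis.mk_apply]; rfl

lemma rgen_mul_bR (x : X) (S : Finset X) :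
    rgen x * bR X S = if x ∈ S then 0 else bR X (insert x S) := by
  rw [bR_apply]
  have hr : rgen x = mkQ X (MvPolynomial.X x) := rfl
  have : rgen x * mkQ X (monomial (sqf S) 1) =
      mkQ X (monomial (Finsupp.single x 1 + sqf S) 1) := by
    rw [hr, ← map_mul]
    congr 1
    rw [show (MvPolynomial.X x : MvPolynomial X F2) = monomial (Finsupp.single x 1) 1 from rfl,
      monomial_mul, mul_one]
  rw [this]
  by_cases h : x ∈ S
  · rw [if_pos h]
    refine mk_monomial_of_two (x := x) ?_ 1
    have : sqf S x = 1 := by rw [sqf_apply, if_pos h]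
    simp [Finsupp.single_apply, this]
  · rw [if_neg h, bR_apply, sqf_insert h]

def epsA (X : Type) [DecidableEq X] : Rgen X →ₐ[F2] F2 :=
  Ideal.Quotient.liftₐ (Ispan X) (aeval fun _ => (0 : F2)) (by
    intro a ha
    have : Ispan X ≤ RingHom.ker (aeval fun _ => (0 : F2) : MvPolynomial X F2 →ₐ[F2] F2) := by
      rw [Ideal.span_le]
      rintro _ ⟨x, rfl⟩
      simp [RingHom.mem_ker]
    exact this ha)

lemma epsA_mk (p : MvPolynomial X F2) : epsA X (mkQ X p) = aeval (fun _ => (0 : F2)) p := by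
  rfl

lemma epsA_rgen (x : X) : epsA X (rgen x) = 0 := by
  have : rgen x = mkQ X (MvPolynomial.X x) := rfl
  rw [this, epsA_mk]
  simp

lemma epsA_bR [Fintype X] (S : Finset X) :
    epsA X (bR X S) = if S = ∅ then 1 else 0 := by
  rw [bR_apply, epsA_mk, aeval_monomial]
  by_cases h : S = ∅
  · subst h
    rw [if_pos rfl]
    simp [sqf_empty]
  · rw [if_neg h]
    obtain ⟨x, hx⟩ := Finset.nonempty_iff_ne_empty.mpr h
    have hsup : x ∈ (sqf S).support := by rw [sqf_support]; exact hx
    have hz : (0 : F2) ^ (sqf S x) = 0 := by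
      rw [sqf_apply, if_pos hx]; norm_num
    rw [Finsupp.prod, Finset.prod_eq_zero hsup hz, mul_zero]

def qAug (X : Type) [DecidableEq X] : FX X →ₗ[F2] F2 :=
  (TensorProduct.lid F2 F2).toLinearMap ∘ₗ
    TensorProduct.map (epsA X).toLinearMap (Finsupp.lapply 0)

lemma qAug_tmul (r : Rgen X) (n : X →₀ ℕ) :
    qAug X (r ⊗ₜ[F2] ximon n) = if n = 0 then epsA X r else 0 := by
  simp only [qAug, LinearMap.comp_apply, TensorProduct.map_tmul, LinearEquiv.coe_toLinearMap,
    TensorProduct.lid_tmul, AlgHom.toLinearMap_apply, Finsupp.lapply_apply, ximon,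
    Finsupp.single_apply]
  by_cases h : n = 0 <;> simp [h]

lemma dFX_tmul [Fintype X] (a : Rgen X) (ξ : XiX X) :
    dFX X (a ⊗ₜ[F2] ξ) = ∑ x : X, (rgen x * a) ⊗ₜ[F2] (xiMul x ξ) := by
  rw [dFX, LinearMap.sum_apply]
  exact Finset.sum_congr rfl fun x _ => by
    rw [TensorProduct.map_tmul, LinearMap.mulLeft_apply]

lemma dFX_basis [Fintype X] (S : Finset X) (n : X →₀ ℕ) :
    dFX X (bR X S ⊗ₜ[F2] ximon n) =
      ∑ x : X, (if x ∉ S ∧ n x ≠ 0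
        then bR X (insert x S) ⊗ₜ[F2] ximon (n - Finsupp.single x 1) else (0 : FX X)) := by
  rw [dFX_tmul]
  refine Finset.sum_congr rfl fun x _ => ?_
  rw [rgen_mul_bR, xiMul_ximon]
  by_cases hS : x ∈ S
  · rw [if_pos hS, TensorProduct.zero_tmul, if_neg (fun h => h.1 hS)]
  · rw [if_neg hS]
    by_cases hn : n x = 0
    · rw [if_pos hn, if_neg (by tauto), TensorProduct.tmul_zero]
    · rw [if_neg hn, if_pos ⟨hS, hn⟩]

-- Part 1 and 2 helpers
abbrev Dx (x : X) : FX X →ₗ[F2] FX X :=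
  TensorProduct.map (LinearMap.mulLeft F2 (rgen x)) (xiMul x)

lemma xiMul_single (x : X) (n : X →₀ ℕ) (c : F2) :
    xiMul x (Finsupp.single n c) =
      if n x = 0 then 0 else Finsupp.single (n - Finsupp.single x 1) c := by
  rw [xiMul, Finsupp.lsum_single]
  split <;> simp

lemma rgen_sq (x : X) : rgen x * rgen x = 0 := by
  have : rgen x * rgen x = mkQ X (MvPolynomial.X x ^ 2) := by
    rw [sq]; rfl
  rw [this, Ideal.Quotient.mkₐ_eq_mk, Ideal.Quotient.eq_zero_iff_mem]
  exact Ideal.subset_span ⟨x, rfl⟩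

lemma sub_single_apply_ne (n : X →₀ ℕ) {x y : X} (h : y ≠ x) :
    ((n - Finsupp.single y 1 : X →₀ ℕ)) x = n x := by
  rw [Finsupp.tsub_apply, Finsupp.single_eq_of_ne' h, Nat.sub_zero]

lemma xiMul_xiMul (x y : X) (ξ : XiX X) : xiMul x (xiMul y ξ) = xiMul y (xiMul x ξ) := by
  induction ξ using Finsupp.induction_linear with
  | zero => simp
  | add f g hf hg => simp [map_add, hf, hg]
  | single n c =>
    rcases eq_or_ne x y with rfl | hxy
    · rfl
    · rw [xiMul_single, xiMul_single]
      by_cases hy : n y = 0 <;> by_cases hx : n x = 0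
      · rw [if_pos hy, if_pos hx, map_zero, map_zero]
      · rw [if_pos hy, if_neg hx, map_zero, xiMul_single,
          if_pos (by rw [sub_single_apply_ne n hxy]; exact hy)]
      · rw [if_neg hy, if_pos hx, map_zero, xiMul_single,
          if_pos (by rw [sub_single_apply_ne n (Ne.symm hxy)]; exact hx)]
      · rw [if_neg hy, if_neg hx, xiMul_single, xiMul_single,
          if_neg (by rw [sub_single_apply_ne n (Ne.symm hxy)]; exact hx),
          if_neg (by rw [sub_single_apply_ne n hxy]; exact hy)]
        congr 1
        ext z
        simp only [Finsupp.tsub_apply]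
        omega

lemma Dx_Dx_self (x : X) (z : FX X) : Dx x (Dx x z) = 0 := by
  induction z using TensorProduct.induction_on with
  | zero => simp
  | add a b ha hb => rw [map_add, map_add, ha, hb, add_zero]
  | tmul a b =>
    rw [TensorProduct.map_tmul, TensorProduct.map_tmul, LinearMap.mulLeft_apply,
      LinearMap.mulLeft_apply, ← mul_assoc, rgen_sq, zero_mul, TensorProduct.zero_tmul]

lemma Dx_comm (x y : X) (z : FX X) : Dx x (Dx y z) = Dx y (Dx x z) := by
  induction z using TensorProduct.induction_on with
  | zero => simp
  | add a b ha hb => rw [map_add, map_add, ha, hb, map_add, map_add]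
  | tmul a b =>
    simp only [TensorProduct.map_tmul, LinearMap.mulLeft_apply]
    rw [← mul_assoc, ← mul_assoc, mul_comm (rgen x) (rgen y), xiMul_xiMul]

lemma dd_zero [Fintype X] : (dFX X).comp (dFX X) = 0 := by
  apply LinearMap.ext
  intro z
  simp only [LinearMap.comp_apply, LinearMap.zero_apply, dFX, LinearMap.sum_apply]
  rw [Finset.sum_congr rfl fun x _ => map_sum (TensorProduct.map _ _) _ Finset.univ]
  rw [← Finset.sum_product']
  refine Finset.sum_ninvolution Prod.swap ?_ ?_ (fun p => Finset.mem_univ _) (fun p => rfl)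
  · intro p
    show Dx p.1 (Dx p.2 z) + Dx p.2 (Dx p.1 z) = 0
    rw [Dx_comm p.2 p.1 z]
    exact add_self_F2 _
  · intro p hp hsw
    exfalso
    apply hp
    have h21 : p.2 = p.1 := congrArg Prod.fst hsw
    show Dx p.1 (Dx p.2 z) = 0
    rw [h21]
    exact Dx_Dx_self _ _

lemma d_linear [Fintype X] (r : Rgen X) (m : FX X) : dFX X (r • m) = r • dFX X m := by
  simp only [dFX, LinearMap.sum_apply]
  rw [Finset.smul_sum]
  refine Finset.sum_congr rfl fun x _ => ?_
  induction m using TensorProduct.induction_on with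
  | zero => simp
  | add a b ha hb => rw [smul_add, map_add, map_add, smul_add, ha, hb]
  | tmul a b =>
    rw [TensorProduct.smul_tmul', TensorProduct.map_tmul, TensorProduct.map_tmul,
      TensorProduct.smul_tmul', LinearMap.mulLeft_apply, LinearMap.mulLeft_apply]
    congr 1
    rw [smul_eq_mul, smul_eq_mul, mul_left_comm]

-- Homotopy machinery
def bXi (X : Type) [DecidableEq X] : Module.Basis (X →₀ ℕ) F2 (XiX X) := Finsupp.basisSingleOne

def bF (X : Type) [Fintype X] [DecidableEq X] : Module.Basis (Finset X × (X →₀ ℕ)) F2 (FX X) :=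
  Module.Basis.tensorProduct (bR X) (bXi X)

lemma bF_apply [Fintype X] (S : Finset X) (n : X →₀ ℕ) :
    bF X (S, n) = bR X S ⊗ₜ[F2] ximon n := by
  rw [bF, Module.Basis.tensorProduct_apply]
  rfl

section Homotopy
variable [Fintype X] [LinearOrder X]

def hfun (S : Finset X) (n : X →₀ ℕ) : FX X :=
  if h : (S ∪ n.support).Nonempty then
    (if (S ∪ n.support).min' h ∈ S
      then bR X (S.erase ((S ∪ n.support).min' h)) ⊗ₜ[F2]
        ximon (n + Finsupp.single ((S ∪ n.support).min' h) 1)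
      else 0)
  else 0

def Hmap (X : Type) [Fintype X] [DecidableEq X] [LinearOrder X] : FX X →ₗ[F2] FX X :=
  (bF X).constr F2 fun p => hfun p.1 p.2

lemma Hmap_basis (S : Finset X) (n : X →₀ ℕ) :
    Hmap X (bR X S ⊗ₜ[F2] ximon n) = hfun S n := by
  rw [← bF_apply, Hmap, Module.Basis.constr_basis]

lemma hfun_eq_of {S : Finset X} {n : X →₀ ℕ} {m : X} (hmem : m ∈ S ∪ n.support)
    (hlb : ∀ y ∈ S ∪ n.support, m ≤ y) :
    hfun S n = if m ∈ S
      then bR X (S.erase m) ⊗ₜ[F2] ximon (n + Finsupp.single m 1) else 0 := by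
  have h : (S ∪ n.support).Nonempty := ⟨m, hmem⟩
  have hm : (S ∪ n.support).min' h = m :=
    le_antisymm (Finset.min'_le _ m hmem) (Finset.le_min' _ h m hlb)
  rw [hfun, dif_pos h, hm]

lemma hfun_zero_zero : hfun (∅ : Finset X) (0 : X →₀ ℕ) = 0 := by
  rw [hfun, dif_neg]
  simp

lemma support_sub_subset (n : X →₀ ℕ) (x : X) :
    ((n - Finsupp.single x 1 : X →₀ ℕ)).support ⊆ n.support := by
  intro y hy
  rw [Finsupp.mem_support_iff] at hy ⊢
  rw [Finsupp.tsub_apply] at hy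
  omega

lemma qAug_basis (S : Finset X) (n : X →₀ ℕ) :
    qAug X (bR X S ⊗ₜ[F2] ximon n) = if S = ∅ ∧ n = 0 then 1 else 0 := by
  rw [qAug_tmul, epsA_bR]
  by_cases hn : n = 0 <;> by_cases hS : S = ∅ <;> simp [hn, hS]

-- Finsupp arithmetic
lemma fs_add_sub_self (n : X →₀ ℕ) (x : X) :
    (n + Finsupp.single x 1 - Finsupp.single x 1 : X →₀ ℕ) = n := by
  ext y
  rw [Finsupp.tsub_apply, Finsupp.add_apply]
  omega

lemma fs_sub_add_self (n : X →₀ ℕ) (x : X) (h : n x ≠ 0) :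
    ((n - Finsupp.single x 1 : X →₀ ℕ) + Finsupp.single x 1) = n := by
  ext y
  rw [Finsupp.add_apply, Finsupp.tsub_apply, Finsupp.single_apply]
  rcases eq_or_ne x y with rfl | hxy
  · rw [if_pos rfl]
    omega
  · rw [if_neg hxy]
    omega

lemma fs_add_sub_comm (n : X →₀ ℕ) {x m : X} (hxm : x ≠ m) (hx : n x ≠ 0) :
    (n + Finsupp.single m 1 - Finsupp.single x 1 : X →₀ ℕ) =
      (n - Finsupp.single x 1 : X →₀ ℕ) + Finsupp.single m 1 := by
  ext y
  rw [Finsupp.tsub_apply, Finsupp.add_apply, Finsupp.add_apply, Finsupp.tsub_apply,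
    Finsupp.single_apply, Finsupp.single_apply]
  rcases eq_or_ne x y with rfl | hxy
  · rw [if_neg (fun hh => hxm hh.symm)]
    omega
  · rw [if_neg hxy]
    omega

lemma fs_add_single_apply_ne (n : X →₀ ℕ) {x m : X} (h : m ≠ x) :
    (n + Finsupp.single m 1 : X →₀ ℕ) x = n x := by
  rw [Finsupp.add_apply, Finsupp.single_eq_of_ne' h, add_zero]

end Homotopy

section HomotopyId
variable [Fintype X] [LinearOrder X]

lemma homotopy_id :
    (dFX X) ∘ₗ (Hmap X) + (Hmap X) ∘ₗ (dFX X) +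
      (qAug X).smulRight (bR X ∅ ⊗ₜ[F2] ximon 0) = LinearMap.id := by
  refine (bF X).ext fun p => ?_
  obtain ⟨S, n⟩ := p
  rw [bF_apply]
  simp only [LinearMap.add_apply, LinearMap.comp_apply, LinearMap.smulRight_apply,
    LinearMap.id_apply]
  by_cases hne : (S ∪ n.support).Nonempty
  case neg =>
    have hS : S = ∅ := by
      rw [Finset.not_nonempty_iff_eq_empty, Finset.union_eq_empty] at hne; exact hne.1
    have hn : n = 0 := by
      rw [Finset.not_nonempty_iff_eq_empty, Finset.union_eq_empty] at hne
      exact Finsupp.support_eq_empty.mp hne.2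
    subst hS; subst hn
    rw [Hmap_basis, hfun_zero_zero, map_zero, qAug_basis, if_pos ⟨rfl, rfl⟩, one_smul]
    have hd : dFX X (bR X ∅ ⊗ₜ[F2] ximon 0) = 0 := by
      rw [dFX_basis]
      refine Finset.sum_eq_zero fun x _ => ?_
      rw [if_neg]
      rintro ⟨-, h⟩
      exact h rfl
    rw [hd, map_zero, zero_add, zero_add]
  case pos =>
    set m := (S ∪ n.support).min' hne with hm
    have hmem : m ∈ S ∪ n.support := Finset.min'_mem _ hne
    have hlb : ∀ y ∈ S ∪ n.support, m ≤ y := fun y hy => Finset.min'_le _ y hy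
    have hHd : Hmap X (dFX X (bR X S ⊗ₜ[F2] ximon n)) =
        ∑ x : X, (if x ∉ S ∧ n x ≠ 0
          then hfun (insert x S) (n - Finsupp.single x 1) else 0) := by
      rw [dFX_basis, map_sum]
      refine Finset.sum_congr rfl fun x _ => ?_
      rw [apply_ite (Hmap X), map_zero, Hmap_basis]
    by_cases hmS : m ∈ S
    · -- Case B1
      have hq : qAug X (bR X S ⊗ₜ[F2] ximon n) = 0 := by
        rw [qAug_basis, if_neg]
        rintro ⟨h1, -⟩
        rw [h1] at hmS; exact absurd hmS (Finset.notMem_empty m)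
      have hH : Hmap X (bR X S ⊗ₜ[F2] ximon n) =
          bR X (S.erase m) ⊗ₜ[F2] ximon (n + Finsupp.single m 1) := by
        rw [Hmap_basis, hfun_eq_of hmem hlb, if_pos hmS]
      rw [hH, hq, zero_smul, add_zero, hHd, dFX_basis]
      rw [← Finset.sum_add_distrib]
      have key : ∀ x : X,
          ((if x ∉ S.erase m ∧ ((n + Finsupp.single m 1 : X →₀ ℕ)) x ≠ 0
            then bR X (insert x (S.erase m)) ⊗ₜ[F2]
              ximon (n + Finsupp.single m 1 - Finsupp.single x 1) else 0)
          + (if x ∉ S ∧ n x ≠ 0 then hfun (insert x S) (n - Finsupp.single x 1) else 0))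
          = if x = m then bR X S ⊗ₜ[F2] ximon n else (0 : FX X) := by
        intro x
        rcases eq_or_ne x m with rfl | hxm
        · have c1 : m ∉ S.erase m ∧ ((n + Finsupp.single m 1 : X →₀ ℕ)) m ≠ 0 :=
            ⟨Finset.notMem_erase m S,
              by rw [Finsupp.add_apply, Finsupp.single_eq_same]; omega⟩
          rw [if_pos c1, if_neg (c := m ∉ S ∧ n m ≠ 0) (fun h => h.1 hmS), if_pos rfl,
            add_zero, Finset.insert_erase hmS, fs_add_sub_self]
        · rw [if_neg hxm]
          by_cases hc : x ∉ S ∧ n x ≠ 0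
          · have hcond : x ∉ S.erase m ∧ ((n + Finsupp.single m 1 : X →₀ ℕ)) x ≠ 0 := by
              constructor
              · intro hx; exact hc.1 (Finset.mem_of_mem_erase hx)
              · rw [fs_add_single_apply_ne n (Ne.symm hxm)]; exact hc.2
            rw [if_pos hcond, if_pos hc]
            have hmem' : m ∈ insert x S ∪ (n - Finsupp.single x 1 : X →₀ ℕ).support :=
              Finset.mem_union_left _ (Finset.mem_insert_of_mem hmS)
            have hlb' : ∀ y ∈ insert x S ∪ (n - Finsupp.single x 1 : X →₀ ℕ).support,
                m ≤ y := by
              intro y hy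
              rcases Finset.mem_union.mp hy with hy | hy
              · rcases Finset.mem_insert.mp hy with rfl | hy
                · exact hlb y (Finset.mem_union_right _ (Finsupp.mem_support_iff.mpr hc.2))
                · exact hlb y (Finset.mem_union_left _ hy)
              · exact hlb y (Finset.mem_union_right _ (support_sub_subset n x hy))
            rw [hfun_eq_of hmem' hlb', if_pos (Finset.mem_insert_of_mem hmS),
              Finset.erase_insert_of_ne hxm, fs_add_sub_comm n hxm hc.2]
            exact add_self_F2 _
          · have hcond : ¬(x ∉ S.erase m ∧ ((n + Finsupp.single m 1 : X →₀ ℕ)) x ≠ 0) := by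
              intro hx
              apply hc
              refine ⟨fun hxS => hx.1 (Finset.mem_erase_of_ne_of_mem hxm hxS), ?_⟩
              intro h0
              apply hx.2
              rw [fs_add_single_apply_ne n (Ne.symm hxm), h0]
            rw [if_neg hcond, if_neg hc, add_zero]
      rw [Finset.sum_congr rfl fun x _ => key x]
      simp
    · -- Case B2
      have hnm : n m ≠ 0 := by
        rcases Finset.mem_union.mp hmem with h | h
        · exact absurd h hmS
        · exact Finsupp.mem_support_iff.mp h
      have hq : qAug X (bR X S ⊗ₜ[F2] ximon n) = 0 := by
        rw [qAug_basis, if_neg]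
        rintro ⟨-, h2⟩
        rw [h2] at hnm; exact hnm rfl
      have hH : Hmap X (bR X S ⊗ₜ[F2] ximon n) = 0 := by
        rw [Hmap_basis, hfun_eq_of hmem hlb, if_neg hmS]
      rw [hH, map_zero, hq, zero_smul, add_zero, zero_add, hHd]
      have key : ∀ x : X,
          (if x ∉ S ∧ n x ≠ 0 then hfun (insert x S) (n - Finsupp.single x 1) else 0)
          = if x = m then bR X S ⊗ₜ[F2] ximon n else (0 : FX X) := by
        intro x
        rcases eq_or_ne x m with rfl | hxm
        · rw [if_pos rfl, if_pos ⟨hmS, hnm⟩]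
          have hmem' : m ∈ insert m S ∪ (n - Finsupp.single m 1 : X →₀ ℕ).support :=
            Finset.mem_union_left _ (Finset.mem_insert_self m S)
          have hlb' : ∀ y ∈ insert m S ∪ (n - Finsupp.single m 1 : X →₀ ℕ).support,
              m ≤ y := by
            intro y hy
            rcases Finset.mem_union.mp hy with hy | hy
            · rcases Finset.mem_insert.mp hy with rfl | hy
              · exact le_refl m
              · exact hlb y (Finset.mem_union_left _ hy)
            · exact hlb y (Finset.mem_union_right _ (support_sub_subset n m hy))
          rw [hfun_eq_of hmem' hlb', if_pos (Finset.mem_insert_self m S),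
            Finset.erase_insert hmS, fs_sub_add_self n m hnm]
        · rw [if_neg hxm]
          by_cases hc : x ∉ S ∧ n x ≠ 0
          · rw [if_pos hc]
            have hmem' : m ∈ insert x S ∪ (n - Finsupp.single x 1 : X →₀ ℕ).support := by
              refine Finset.mem_union_right _ (Finsupp.mem_support_iff.mpr ?_)
              rw [sub_single_apply_ne n hxm]
              exact hnm
            have hlb' : ∀ y ∈ insert x S ∪ (n - Finsupp.single x 1 : X →₀ ℕ).support,
                m ≤ y := by
              intro y hy
              rcases Finset.mem_union.mp hy with hy | hy
              · rcases Finset.mem_insert.mp hy with rfl | hy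
                · exact hlb y (Finset.mem_union_right _ (Finsupp.mem_support_iff.mpr hc.2))
                · exact hlb y (Finset.mem_union_left _ hy)
              · exact hlb y (Finset.mem_union_right _ (support_sub_subset n x hy))
            rw [hfun_eq_of hmem' hlb', if_neg]
            intro hmx
            rcases Finset.mem_insert.mp hmx with h | h
            · exact hxm h.symm
            · exact hmS h
          · rw [if_neg hc]
      rw [Finset.sum_congr rfl fun x _ => key x]
      simp

end HomotopyId

lemma qAug_tmul' (r : Rgen X) (ξ : XiX X) :
    qAug X (r ⊗ₜ[F2] ξ) = epsA X r * ξ 0 := by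
  simp [qAug, TensorProduct.lid_tmul, smul_eq_mul]

lemma q_comp_d [Fintype X] : (qAug X).comp (dFX X) = 0 := by
  apply TensorProduct.ext'
  intro a b
  rw [LinearMap.comp_apply, dFX_tmul, map_sum, LinearMap.zero_apply]
  refine Finset.sum_eq_zero fun x _ => ?_
  rw [qAug_tmul', map_mul, epsA_rgen, zero_mul, zero_mul]

lemma d_one_ximon_zero [Fintype X] : dFX X ((1 : Rgen X) ⊗ₜ[F2] ximon 0) = 0 := by
  rw [dFX_tmul]
  refine Finset.sum_eq_zero fun x _ => ?_
  rw [xiMul_ximon, if_pos (Finsupp.zero_apply (a := x)), TensorProduct.tmul_zero]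

lemma qAug_one [Fintype X] : qAug X ((1 : Rgen X) ⊗ₜ[F2] ximon 0) = 1 := by
  rw [qAug_tmul, if_pos rfl, map_one]

lemma bR_empty_eq_one [Fintype X] : bR X (∅ : Finset X) = (1 : Rgen X) := by
  rw [bR_apply, sqf_empty]
  have : (monomial (0 : X →₀ ℕ) (1 : F2)) = 1 := by
    rw [monomial_zero', MvPolynomial.C_1]
  rw [this, map_one]


theorem stmt2 (X : Type) [Fintype X] [DecidableEq X] :
    -- ∂² = 0
    (dFX X).comp (dFX X) = 0 ∧
    -- ∂ is R_X-linear (R_X acting on the left tensor factor)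
    (∀ (r : Rgen X) (m : FX X), dFX X (r • m) = r • dFX X m) ∧
    -- F_X consists of free R_X-modules
    Module.Free (Rgen X) (FX X) ∧
    -- the augmentation q to F = R_X/({x}) exhibits F_X as a resolution of F
    (∃ q : FX X →ₗ[F2] F2,
      (∃ ε : Rgen X →ₐ[F2] F2, (∀ x : X, ε (rgen x) = 0) ∧
        ∀ (r : Rgen X) (n : X →₀ ℕ),
          q (r ⊗ₜ[F2] ximon n) = if n = 0 then ε r else 0) ∧
      q.comp (dFX X) = 0 ∧
      Function.Surjective q ∧
      (∃ z : FX X, z ∈ LinearMap.ker (dFX X) ∧ q z = 1) ∧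
      ∀ z : FX X, z ∈ LinearMap.ker (dFX X) → q z = 0 → ∃ w, dFX X w = z) := by
  letI : LinearOrder X := LinearOrder.lift' (Fintype.equivFin X) (Equiv.injective _)
  refine ⟨dd_zero, d_linear, inferInstance, qAug X,
    ⟨epsA X, epsA_rgen, fun r n => qAug_tmul r n⟩, q_comp_d, ?_, ?_, ?_⟩
  · intro c
    refine ⟨c • ((1 : Rgen X) ⊗ₜ[F2] ximon 0), ?_⟩
    rw [map_smul, qAug_one, smul_eq_mul, mul_one]
  · exact ⟨(1 : Rgen X) ⊗ₜ[F2] ximon 0, LinearMap.mem_ker.mpr d_one_ximon_zero, qAug_one⟩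
  · intro z hz hqz
    refine ⟨Hmap X z, ?_⟩
    have hid := LinearMap.congr_fun (homotopy_id (X := X)) z
    simp only [LinearMap.add_apply, LinearMap.comp_apply, LinearMap.smulRight_apply,
      LinearMap.id_apply] at hid
    rw [LinearMap.mem_ker] at hz
    rw [hz, map_zero, hqz, zero_smul, add_zero, add_zero] at hid
    exact hid
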